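/- arXiv:1312.2304 — 6 statements merged into one kernel-verified Lean document; each statement's English description precedes it below -/
import Mathlib

section
/- A subset ℓ of a compact set Ω ⊆ ℝ² is a closed line segment if and only if it is closed, convex, and can be disconnected by the removal of a single point (i.e., there exists a point x ∈ ℓ such that ℓ \ {x} is disconnected). -/
open Set

private lemma mem_seg_iff {a b y : ℝ × ℝ} :
    y ∈ segment ℝ a b ↔ ∃ t ∈ Icc (0:ℝ) 1, y = t • (b - a) + a := by
  rw [segment_eq_image']
  constructor
  · rintro ⟨t, ht, rfl⟩; exact ⟨t, ht, by abel_nf⟩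
  · rintro ⟨t, ht, rfl⟩; exact ⟨t, ht, by abel_nf⟩

private lemma seg_closed (a b : ℝ × ℝ) : IsClosed (segment ℝ a b) := by
  rw [segment_eq_image']
  exact (isCompact_Icc.image (by continuity)).isClosed

/-- A subset `ℓ` of a compact set `Ω ⊆ ℝ²` is a (nondegenerate) closed line segment if and
only if it is closed, convex, and can be disconnected by the removal of a single point. -/
theorem stmt0 (Ω : Set (ℝ × ℝ)) (hΩ : IsCompact Ω) (ℓ : Set (ℝ × ℝ)) (hℓΩ : ℓ ⊆ Ω) :
    (∃ a b : ℝ × ℝ, a ≠ b ∧ ℓ = segment ℝ a b) ↔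
      (IsClosed ℓ ∧ Convex ℝ ℓ ∧ ∃ x ∈ ℓ, ¬ IsPreconnected (ℓ \ {x})) := by
  constructor
  · rintro ⟨a, b, hab, rfl⟩
    refine ⟨seg_closed a b, convex_segment a b, ?_⟩
    set m : ℝ × ℝ := (1/2 : ℝ) • a + (1/2 : ℝ) • b with hm
    have hmseg : m ∈ segment ℝ a b := ⟨1/2, 1/2, by norm_num, by norm_num, by norm_num, rfl⟩
    refine ⟨m, hmseg, ?_⟩
    obtain ⟨f, hfab⟩ : ∃ f : (ℝ × ℝ) →L[ℝ] ℝ, f a ≠ f b := by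
      by_cases h : a.1 = b.1
      · refine ⟨ContinuousLinearMap.snd ℝ ℝ ℝ, fun h2 => hab (Prod.ext h h2)⟩
      · exact ⟨ContinuousLinearMap.fst ℝ ℝ ℝ, h⟩
    have hfm : f m = (f a + f b) / 2 := by
      rw [hm, map_add, map_smul, map_smul, smul_eq_mul, smul_eq_mul]; ring
    intro hpre
    have key := hpre {y | f y < f m} {y | f m < f y}
      (isOpen_lt f.continuous continuous_const)
      (isOpen_lt continuous_const f.continuous)
    have hcov : segment ℝ a b \ {m} ⊆ {y | f y < f m} ∪ {y | f m < f y} := by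
      rintro y ⟨hy, hym⟩
      rcases lt_trichotomy (f y) (f m) with h | h | h
      · exact Or.inl h
      · exfalso
        apply hym
        rcases mem_seg_iff.1 hy with ⟨t, ht, rfl⟩
        have hft : f (t • (b - a) + a) = t * (f b - f a) + f a := by
          rw [map_add, map_smul, map_sub, smul_eq_mul]
        have hfb : f b - f a ≠ 0 := sub_ne_zero.2 (Ne.symm hfab)
        have ht2 : t = 1/2 := by
          rw [hft, hfm] at h
          have h0 : (t - 1/2) * (f b - f a) = 0 := by linear_combination h
          rcases mul_eq_zero.1 h0 with h' | h'
          · linarith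
          · exact absurd h' hfb
        subst ht2
        simp only [mem_singleton_iff, hm]
        module
      · exact Or.inr h
    have hane : a ∈ segment ℝ a b \ {m} := by
      refine ⟨left_mem_segment ℝ a b, ?_⟩
      simp only [mem_singleton_iff]
      intro h
      apply hab
      have h1 : (1/2 : ℝ) • (a - b) = 0 := by
        rw [show (1/2:ℝ) • (a - b) = a - ((1/2:ℝ) • a + (1/2:ℝ) • b) by module, ← hm, ← h,
          sub_self]
      rcases smul_eq_zero.1 h1 with h' | h'
      · norm_num at h'
      · exact sub_eq_zero.1 h'
    have hbne : b ∈ segment ℝ a b \ {m} := by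
      refine ⟨right_mem_segment ℝ a b, ?_⟩
      simp only [mem_singleton_iff]
      intro h
      apply hab
      have h1 : (1/2 : ℝ) • (a - b) = 0 := by
        rw [show (1/2:ℝ) • (a - b) = ((1/2:ℝ) • a + (1/2:ℝ) • b) - b by module, ← hm, ← h,
          sub_self]
      rcases smul_eq_zero.1 h1 with h' | h'
      · norm_num at h'
      · exact sub_eq_zero.1 h'
    have hlt : f a < f m ∧ f m < f b ∨ f b < f m ∧ f m < f a := by
      rcases lt_or_gt_of_ne hfab with h | h
      · left; constructor <;> (rw [hfm]; linarith)
      · right; constructor <;> (rw [hfm]; linarith)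
    have h1 : (segment ℝ a b \ {m} ∩ {y | f y < f m}).Nonempty := by
      rcases hlt with ⟨h, _⟩ | ⟨h, _⟩
      · exact ⟨a, hane, h⟩
      · exact ⟨b, hbne, h⟩
    have h2 : (segment ℝ a b \ {m} ∩ {y | f m < f y}).Nonempty := by
      rcases hlt with ⟨_, h⟩ | ⟨_, h⟩
      · exact ⟨b, hbne, h⟩
      · exact ⟨a, hane, h⟩
    rcases key hcov h1 h2 with ⟨y, _, hy1, hy2⟩
    simp only [mem_setOf_eq] at hy1 hy2
    exact absurd (hy1.trans hy2) (lt_irrefl _)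
  · rintro ⟨hcl, hconv, x, hx, hdis⟩
    have hcomp : IsCompact ℓ := hΩ.of_isClosed_subset hcl hℓΩ
    by_cases hcol : Collinear ℝ ℓ
    · -- collinear case: ℓ is a segment
      obtain ⟨v, hv⟩ := (collinear_iff_of_mem hx).1 hcol
      by_cases hv0 : v = 0
      · exfalso
        apply hdis
        have : ℓ \ {x} = ∅ := by
          ext y
          simp only [mem_diff, mem_singleton_iff, mem_empty_iff_false, iff_false, not_and, not_not]
          intro hy
          rcases hv y hy with ⟨r, hr⟩
          simp [hr, hv0]
        rw [this]; exact isPreconnected_empty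
      · set g : ℝ →ᵃ[ℝ] ℝ × ℝ := AffineMap.lineMap x (v + x) with hg
        have hgeq : ∀ t : ℝ, g t = t • v + x := by
          intro t
          simp [hg, AffineMap.lineMap_apply, vsub_eq_sub, vadd_eq_add]
        set T : Set ℝ := (fun t : ℝ => t • v + x) ⁻¹' ℓ with hT
        have hgcont : Continuous fun t : ℝ => t • v + x := by continuity
        have hTconv : Convex ℝ T := by
          have := hconv.affine_preimage g
          have hTg : T = g ⁻¹' ℓ := by ext t; simp [hT, hgeq]
          rw [hTg]; exact this
        have hTcl : IsClosed T := hcl.preimage hgcont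
        have hTbdd : Bornology.IsBounded T := by
          obtain ⟨C, hC⟩ := hcomp.isBounded.exists_norm_le
          have hvpos : (0:ℝ) < ‖v‖ := norm_pos_iff.2 hv0
          rw [Metric.isBounded_iff_subset_closedBall 0]
          refine ⟨(C + ‖x‖) / ‖v‖, fun t ht => ?_⟩
          simp only [Metric.mem_closedBall, dist_zero_right, Real.norm_eq_abs]
          have h1 : ‖t • v + x‖ ≤ C := hC _ ht
          have h2 : ‖t • v‖ ≤ C + ‖x‖ := by
            have h3 : ‖t • v‖ ≤ ‖t • v + x‖ + ‖x‖ := by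
              have h4 := norm_sub_le (t • v + x) x
              simpa [add_sub_cancel_right] using h4
            linarith
          rw [norm_smul, Real.norm_eq_abs] at h2
          rw [le_div_iff₀ hvpos]
          exact h2
        have hTcomp : IsCompact T := Metric.isCompact_iff_isClosed_bounded.2 ⟨hTcl, hTbdd⟩
        have hT0 : (0:ℝ) ∈ T := by
          simp only [hT, mem_preimage, zero_smul, zero_add]
          exact hx
        have hTne : T.Nonempty := ⟨0, hT0⟩
        set c := sInf T with hc'
        set d := sSup T with hd'
        have hc : c ∈ T := hTcomp.sInf_mem hTne
        have hd : d ∈ T := hTcomp.sSup_mem hTne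
        have hcd : c ≤ d := csInf_le_csSup hTne hTcomp.bddBelow hTcomp.bddAbove
        have hTIcc : T = Icc c d := by
          apply Subset.antisymm
          · exact fun t ht => ⟨csInf_le hTcomp.bddBelow ht, le_csSup hTcomp.bddAbove ht⟩
          · rw [← segment_eq_Icc hcd]
            exact hTconv.segment_subset hc hd
        have hℓeq : ℓ = (fun t : ℝ => t • v + x) '' T := by
          apply Subset.antisymm
          · intro y hy
            rcases hv y hy with ⟨r, hr⟩
            rw [vadd_eq_add] at hr
            exact ⟨r, by simp only [hT, mem_preimage, ← hr]; exact hy, hr.symm⟩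
          · rintro y ⟨t, ht, rfl⟩
            exact ht
        have hcdne : c ≠ d := by
          intro hcd2
          apply hdis
          have hsub : ℓ ⊆ {d • v + x} := by
            intro y hy
            rcases hv y hy with ⟨r, hr⟩
            rw [vadd_eq_add] at hr
            have hrT : r ∈ T := by simp only [hT, mem_preimage, ← hr]; exact hy
            rw [hTIcc, hcd2, Icc_self, mem_singleton_iff] at hrT
            simp [hr, hrT]
          have hxeq : x = d • v + x := hsub hx
          have hℓx : ℓ = {x} := by
            apply Subset.antisymm
            · intro y hy
              rw [← hxeq] at hsub
              exact hsub hy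
            · intro y hy
              rw [mem_singleton_iff] at hy
              rw [hy]; exact hx
          rw [hℓx, diff_self]
          exact isPreconnected_empty
        refine ⟨c • v + x, d • v + x, ?_, ?_⟩
        · intro h
          apply hcdne
          have : (c - d) • v = 0 := by
            have := congrArg (· - x) h
            simp only [add_sub_cancel_right] at this
            rw [sub_smul, this, sub_self]
          rcases smul_eq_zero.1 this with h' | h'
          · linarith [sub_eq_zero.1 h']
          · exact absurd h' hv0
        · have himg := image_segment ℝ g c d
          have hgc : ∀ t, g t = t • v + x := hgeq
          rw [hℓeq, hTIcc, ← segment_eq_Icc hcd]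
          have : (fun t : ℝ => t • v + x) '' segment ℝ c d = g '' segment ℝ c d := by
            apply image_congr
            intro t _
            rw [hgc]
          rw [this, himg, hgc, hgc]
    · -- non-collinear case: contradiction, ℓ \ {x} is preconnected
      exfalso
      apply hdis
      apply isPreconnected_of_forall_pair
      intro p hp q hq
      by_cases hxpq : x ∈ segment ℝ p q
      · -- go around via a point off the line p q
        have hpq : p ≠ q := by
          rintro rfl
          rw [segment_same] at hxpq
          exact hp.2 (by simpa using hxpq.symm ▸ rfl)
        obtain ⟨r, hrℓ, hr⟩ : ∃ r ∈ ℓ, r ∉ (affineSpan ℝ {p, q} : Set (ℝ × ℝ)) := by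
          by_contra h'
          push_neg at h'
          apply hcol
          rw [collinear_iff_of_mem hp.1]
          refine ⟨q - p, fun y hy => ?_⟩
          have := h' y hy
          have : (y - p) +ᵥ p ∈ line[ℝ, p, q] := by simpa [vadd_eq_add, sub_add_cancel] using this
          rcases vadd_left_mem_affineSpan_pair.1 this with ⟨c, hc⟩
          exact ⟨c, by rw [vsub_eq_sub] at hc; rw [vadd_eq_add, hc, sub_add_cancel]⟩
        have hxp : x ≠ p := fun h => hp.2 (by simp [h.symm])
        have hxq : x ≠ q := fun h => hq.2 (by simp [h.symm])
        have hxpr : x ∉ segment ℝ p r := by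
          intro hmem
          apply hr
          rcases mem_seg_iff.1 hmem with ⟨t, _, hteq⟩
          rcases mem_seg_iff.1 hxpq with ⟨s, _, hseq⟩
          have hs0 : s ≠ 0 := by rintro rfl; exact hxp (by simpa using hseq)
          have ht0 : t ≠ 0 := by rintro rfl; exact hxp (by simpa using hteq)
          have hkey : t • (r - p) = s • (q - p) := by
            have := hteq.symm.trans hseq
            have := congrArg (· - p) this
            simpa [add_sub_cancel_right] using this
          have hrp : r = (s / t) • (q - p) + p := by
            have h5 := congrArg (fun z => t⁻¹ • z) hkey
            simp only [smul_smul, inv_mul_cancel₀ ht0, one_smul] at h5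
            have h6 : (s / t) • (q - p) = r - p := by rw [div_eq_mul_inv, mul_comm, h5]
            rw [h6]; abel
          rw [hrp]
          exact smul_vsub_vadd_mem_affineSpan_pair (s / t) p q
        have hxqr : x ∉ segment ℝ q r := by
          intro hmem
          apply hr
          rcases mem_seg_iff.1 hmem with ⟨t, _, hteq⟩
          have hxqp : x ∈ segment ℝ q p := by rwa [segment_symm]
          rcases mem_seg_iff.1 hxqp with ⟨s, _, hseq⟩
          have hs0 : s ≠ 0 := by rintro rfl; exact hxq (by simpa using hseq)
          have ht0 : t ≠ 0 := by rintro rfl; exact hxq (by simpa using hteq)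
          have hkey : t • (r - q) = s • (p - q) := by
            have := hteq.symm.trans hseq
            have := congrArg (· - q) this
            simpa [add_sub_cancel_right] using this
          have hrp : r = (s / t) • (p - q) + q := by
            have h5 := congrArg (fun z => t⁻¹ • z) hkey
            simp only [smul_smul, inv_mul_cancel₀ ht0, one_smul] at h5
            have h6 : (s / t) • (p - q) = r - q := by rw [div_eq_mul_inv, mul_comm, h5]
            rw [h6]; abel
          rw [hrp]
          exact smul_vsub_rev_vadd_mem_affineSpan_pair (s / t) p q
        have hrx : r ≠ x := by rintro rfl; exact hxpr (right_mem_segment ℝ p r)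
        refine ⟨segment ℝ p r ∪ segment ℝ r q, ?_, Or.inl (left_mem_segment ℝ p r),
          Or.inr (right_mem_segment ℝ r q), ?_⟩
        · rintro y (hy | hy)
          · exact ⟨hconv.segment_subset hp.1 hrℓ hy, fun h => hxpr (h ▸ hy)⟩
          · refine ⟨hconv.segment_subset hrℓ hq.1 hy, fun h => ?_⟩
            rw [segment_symm] at hy
            exact hxqr (h ▸ hy)
        · exact IsPreconnected.union r (right_mem_segment ℝ p r) (left_mem_segment ℝ r q)
            (convex_segment p r).isPreconnected (convex_segment r q).isPreconnected
      · -- direct segment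
        refine ⟨segment ℝ p q, fun y hy => ⟨hconv.segment_subset hp.1 hq.1 hy, fun h => hxpq (h ▸ hy)⟩,
          left_mem_segment ℝ p q, right_mem_segment ℝ p q, (convex_segment p q).isPreconnected⟩
end

section
/- Let h : Q → σ be a homeomorphism from the closed unit square Q = [0,1]×[0,1] onto σ ⊆ ℝ². For y ∈ [0,1] let ℓ_y = [0,1]×{y}. If h(ℓ_0) is not a line segment, then there exists δ > 0 such that h(ℓ_y) is not a line segment for any y ∈ [0,δ]. -/
/-- Any three points of a segment are "flat" (zero determinant). -/
lemma seg_flat {a b p q r : ℝ × ℝ} (hp : p ∈ segment ℝ a b) (hq : q ∈ segment ℝ a b)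
    (hr : r ∈ segment ℝ a b) :
    (q.1 - p.1) * (r.2 - p.2) - (q.2 - p.2) * (r.1 - p.1) = 0 := by
  obtain ⟨α₁, β₁, -, -, hs₁, h₁⟩ := hp
  obtain ⟨α₂, β₂, -, -, hs₂, h₂⟩ := hq
  obtain ⟨α₃, β₃, -, -, hs₃, h₃⟩ := hr
  have e₁ : β₁ = 1 - α₁ := by linarith
  have e₂ : β₂ = 1 - α₂ := by linarith
  have e₃ : β₃ = 1 - α₃ := by linarith
  subst e₁ e₂ e₃
  have h₁' := congrArg Prod.fst h₁
  have h₁'' := congrArg Prod.snd h₁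
  have h₂' := congrArg Prod.fst h₂
  have h₂'' := congrArg Prod.snd h₂
  have h₃' := congrArg Prod.fst h₃
  have h₃'' := congrArg Prod.snd h₃
  simp only [Prod.smul_fst, Prod.smul_snd, Prod.fst_add, Prod.snd_add, smul_eq_mul] at *
  rw [← h₁', ← h₁'', ← h₂', ← h₂'', ← h₃', ← h₃'']
  ring

/-- A nonempty compact connected flat subset of the plane is a segment. -/
lemma flat_to_segment (S : Set (ℝ × ℝ)) (hne : S.Nonempty) (hcomp : IsCompact S)
    (hconn : IsPreconnected S)
    (hf : ∀ p ∈ S, ∀ q ∈ S, ∀ r ∈ S,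
      (q.1 - p.1) * (r.2 - p.2) - (q.2 - p.2) * (r.1 - p.1) = 0) :
    ∃ a b : ℝ × ℝ, S = segment ℝ a b := by
  obtain ⟨p, hp⟩ := hne
  by_cases hsub : S ⊆ {p}
  · refine ⟨p, p, ?_⟩
    rw [segment_same]
    exact Set.Subset.antisymm hsub (by simpa using hp)
  · obtain ⟨q, hq, hqp'⟩ := Set.not_subset.mp hsub
    have hqp : q ≠ p := by simpa using hqp'
    set u1 : ℝ := q.1 - p.1 with hu1
    set u2 : ℝ := q.2 - p.2 with hu2
    have hu : u1 ^ 2 + u2 ^ 2 ≠ 0 := by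
      intro h0
      apply hqp
      have e1 : q.1 = p.1 := by nlinarith [sq_nonneg u1, sq_nonneg u2]
      have e2 : q.2 = p.2 := by nlinarith [sq_nonneg u1, sq_nonneg u2]
      exact Prod.ext e1 e2
    set g : ℝ × ℝ → ℝ := fun x => ((x.1 - p.1) * u1 + (x.2 - p.2) * u2) / (u1 ^ 2 + u2 ^ 2)
      with hg_def
    have hgc : Continuous g := by
      apply Continuous.div_const
      fun_prop
    set fA : ℝ →ᵃ[ℝ] ℝ × ℝ := AffineMap.lineMap p (((u1, u2) : ℝ × ℝ) + p) with hfA_def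
    have hfA : ∀ t : ℝ, fA t = (p.1 + t * u1, p.2 + t * u2) := by
      intro t
      simp only [hfA_def, AffineMap.lineMap_apply, vsub_eq_sub, vadd_eq_add,
        Prod.ext_iff, add_sub_cancel_right, Prod.smul_fst, Prod.smul_snd, Prod.fst_add,
        Prod.snd_add, smul_eq_mul]
      constructor <;> ring
    have key : ∀ x ∈ S, fA (g x) = x := by
      intro x hx
      have hd : u1 * (x.2 - p.2) - u2 * (x.1 - p.1) = 0 := hf p hp q hq x hx
      rw [hfA]
      have e1 : p.1 + g x * u1 = x.1 := by
        rw [hg_def]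
        field_simp
        linear_combination u2 * hd
      have e2 : p.2 + g x * u2 = x.2 := by
        rw [hg_def]
        field_simp
        linear_combination (-u1) * hd
      exact Prod.ext e1 e2
    set T : Set ℝ := g '' S with hT_def
    have hTc : IsCompact T := hcomp.image hgc
    have hTconn : IsPreconnected T := hconn.image g hgc.continuousOn
    have hTne : T.Nonempty := ⟨g p, p, hp, rfl⟩
    have hTIcc : T = Set.Icc (sInf T) (sSup T) :=
      eq_Icc_of_connected_compact ⟨hTne, hTconn⟩ hTc
    have hmM : sInf T ≤ sSup T := by
      rw [hTIcc] at hTne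
      exact Set.nonempty_Icc.mp hTne
    have hST : S = fA '' T := by
      apply Set.Subset.antisymm
      · intro x hx
        exact ⟨g x, ⟨x, hx, rfl⟩, key x hx⟩
      · rintro _ ⟨t, ⟨x, hx, rfl⟩, rfl⟩
        rw [key x hx]
        exact hx
    refine ⟨fA (sInf T), fA (sSup T), ?_⟩
    rw [hST]
    nth_rewrite 1 [hTIcc]
    rw [← segment_eq_Icc hmM, image_segment]

/-- Let `h` be a homeomorphism from the closed unit square `Q = [0,1] × [0,1]` onto its image
`σ ⊆ ℝ²`. For `y ∈ [0,1]` let `ℓ_y = [0,1] × {y}`. If `h(ℓ_0)` is not a line segment, then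
there exists `δ > 0` such that `h(ℓ_y)` is not a line segment for any `y ∈ [0,δ]`. -/
theorem stmt3 (h : ℝ × ℝ → ℝ × ℝ)
    (hc : ContinuousOn h (Set.Icc (0:ℝ) 1 ×ˢ Set.Icc (0:ℝ) 1))
    (hinj : Set.InjOn h (Set.Icc (0:ℝ) 1 ×ˢ Set.Icc (0:ℝ) 1))
    (h0 : ¬ ∃ a b : ℝ × ℝ, h '' (Set.Icc (0:ℝ) 1 ×ˢ ({0} : Set ℝ)) = segment ℝ a b) :
    ∃ δ > (0:ℝ), ∀ y ∈ Set.Icc (0:ℝ) δ,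
      ¬ ∃ a b : ℝ × ℝ, h '' (Set.Icc (0:ℝ) 1 ×ˢ ({y} : Set ℝ)) = segment ℝ a b := by
  set ℓ0 : Set (ℝ × ℝ) := Set.Icc (0:ℝ) 1 ×ˢ ({0} : Set ℝ) with hℓ0
  have hℓ0sub : ℓ0 ⊆ Set.Icc (0:ℝ) 1 ×ˢ Set.Icc (0:ℝ) 1 := by
    rintro ⟨x, y⟩ ⟨hx, hy⟩
    exact ⟨hx, by simp at hy; simp [hy]⟩
  set S0 : Set (ℝ × ℝ) := h '' ℓ0 with hS0
  have hS0ne : S0.Nonempty := ⟨h (0, 0), (0, 0), ⟨by norm_num, rfl⟩, rfl⟩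
  have hS0comp : IsCompact S0 :=
    (isCompact_Icc.prod isCompact_singleton).image_of_continuousOn (hc.mono hℓ0sub)
  have hS0conn : IsPreconnected S0 :=
    ((convex_Icc (0:ℝ) 1).prod (convex_singleton 0)).isPreconnected.image h (hc.mono hℓ0sub)
  have hnotflat : ¬ ∀ p ∈ S0, ∀ q ∈ S0, ∀ r ∈ S0,
      (q.1 - p.1) * (r.2 - p.2) - (q.2 - p.2) * (r.1 - p.1) = 0 := by
    intro hf
    exact h0 (flat_to_segment S0 hS0ne hS0comp hS0conn hf)
  push_neg at hnotflat
  obtain ⟨P, hP, Q, hQ, R, hR, hdet⟩ := hnotflat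
  obtain ⟨⟨t1, y1⟩, ⟨ht1, hy1⟩, hP'⟩ := hP
  obtain ⟨⟨t2, y2⟩, ⟨ht2, hy2⟩, hQ'⟩ := hQ
  obtain ⟨⟨t3, y3⟩, ⟨ht3, hy3⟩, hR'⟩ := hR
  simp only [Set.mem_singleton_iff] at hy1 hy2 hy3
  subst hy1 hy2 hy3
  -- the determinant as a function of y
  set F : ℝ → ℝ := fun y =>
    ((h (t2, y)).1 - (h (t1, y)).1) * ((h (t3, y)).2 - (h (t1, y)).2) -
      ((h (t2, y)).2 - (h (t1, y)).2) * ((h (t3, y)).1 - (h (t1, y)).1) with hF_def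
  have hcomp' : ∀ t ∈ Set.Icc (0:ℝ) 1, ContinuousOn (fun y => h (t, y)) (Set.Icc (0:ℝ) 1) := by
    intro t ht
    apply hc.comp (by fun_prop : Continuous fun y : ℝ => (t, y)).continuousOn
    intro y hy
    exact ⟨ht, hy⟩
  have hFc : ContinuousOn F (Set.Icc (0:ℝ) 1) := by
    have h1 := hcomp' t1 ht1
    have h2 := hcomp' t2 ht2
    have h3 := hcomp' t3 ht3
    exact ((h2.fst.sub h1.fst).mul (h3.snd.sub h1.snd)).sub
      ((h2.snd.sub h1.snd).mul (h3.fst.sub h1.fst))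
  have hF0 : F 0 ≠ 0 := by
    rw [hF_def]
    simp only [hP', hQ', hR']
    exact hdet
  -- continuity at 0 gives a neighborhood where F ≠ 0
  have hcw : ContinuousWithinAt F (Set.Icc (0:ℝ) 1) 0 := hFc 0 (by norm_num)
  have hev : ∀ᶠ y in nhdsWithin 0 (Set.Icc (0:ℝ) 1), F y ≠ 0 := by
    have : {x : ℝ | x ≠ 0} ∈ nhds (F 0) := isOpen_ne.mem_nhds hF0
    exact hcw this
  rw [Filter.eventually_iff, Metric.mem_nhdsWithin_iff] at hev
  obtain ⟨ε, hε, hball⟩ := hev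
  refine ⟨min (ε / 2) 1, by positivity, ?_⟩
  intro y hy
  rintro ⟨a, b, hab⟩
  have hy1' : y ∈ Set.Icc (0:ℝ) 1 := ⟨hy.1, hy.2.trans (min_le_right _ _)⟩
  have hyε : dist y 0 < ε := by
    rw [Real.dist_eq, sub_zero, abs_of_nonneg hy.1]
    have := hy.2.trans (min_le_left _ _)
    linarith
  have hFy : F y ≠ 0 := hball ⟨Metric.mem_ball.mpr hyε, hy1'⟩
  apply hFy
  have hmem : ∀ t ∈ Set.Icc (0:ℝ) 1, h (t, y) ∈ segment ℝ a b := by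
    intro t ht
    rw [← hab]
    exact ⟨(t, y), ⟨ht, rfl⟩, rfl⟩
  exact seg_flat (hmem t1 ht1) (hmem t2 ht2) (hmem t3 ht3)
end

section
/- If a compact subset h(ℓ) of ℝ² arising as the image of a segment under a homeomorphism fails to be a segment because some midpoint (h(x,0)+h(x',0))/2 is not in h(ℓ_0), then with ε = dist of this midpoint to h(ℓ_0), any y with ‖(t,y)−(t,0)‖-images controlled within ε/3 yields that h(ℓ_y) cannot contain the midpoint (h(x,y)+h(x',y))/2 at the point h(t,y) for any t; formally: if d(v, h(ℓ_0)) = ε > 0 where v = (h(x,0)+h(x',0))/2, and δ > 0 satisfies ‖h(u)−h(u')‖ < ε/3 whenever ‖u−u'‖ ≤ δ, then for 0 ≤ y ≤ δ there is no t ∈ [0,1] with h(t,y) = (h(x,y)+h(x',y))/2. -/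
/-- Quantitative step in the proof: if `v = (h(x,0)+h(x',0))/2` has distance `ε > 0` from
`h(ℓ_0)`, and `δ ≤ 1` is a uniform-continuity modulus for `ε/3`, then for `0 ≤ y ≤ δ`
there is no `t ∈ [0,1]` with `h(t,y) = (h(x,y)+h(x',y))/2`. -/
theorem stmt4 (h : ℝ × ℝ → ℝ × ℝ)
    (hc : ContinuousOn h (Set.Icc (0:ℝ) 1 ×ˢ Set.Icc (0:ℝ) 1))
    (x x' : ℝ) (hx : x ∈ Set.Icc (0:ℝ) 1) (hx' : x' ∈ Set.Icc (0:ℝ) 1)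
    (ε δ : ℝ)
    (hε : ε = Metric.infDist (midpoint ℝ (h (x, 0)) (h (x', 0)))
      (h '' (Set.Icc (0:ℝ) 1 ×ˢ ({0} : Set ℝ))))
    (hε0 : 0 < ε) (hδ0 : 0 < δ) (hδ1 : δ ≤ 1)
    (hδ : ∀ u ∈ Set.Icc (0:ℝ) 1 ×ˢ Set.Icc (0:ℝ) 1,
      ∀ u' ∈ Set.Icc (0:ℝ) 1 ×ˢ Set.Icc (0:ℝ) 1, ‖u - u'‖ ≤ δ → ‖h u - h u'‖ < ε / 3) :
    ∀ y : ℝ, 0 ≤ y → y ≤ δ →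
      ¬ ∃ t ∈ Set.Icc (0:ℝ) 1, h (t, y) = midpoint ℝ (h (x, y)) (h (x', y)) := by
  intro y hy0 hyδ ⟨t, ht, heq⟩
  have hyI : y ∈ Set.Icc (0:ℝ) 1 := ⟨hy0, hyδ.trans hδ1⟩
  have h0I : (0:ℝ) ∈ Set.Icc (0:ℝ) 1 := by norm_num
  have hnorm : ∀ s : ℝ, ‖((s, y) : ℝ × ℝ) - (s, 0)‖ ≤ δ := by
    intro s
    have : ((s, y) : ℝ × ℝ) - (s, 0) = (0, y) := by ext <;> simp
    rw [this, Prod.norm_def]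
    simp [abs_of_nonneg hy0, hyδ, hδ0.le]
  have key : ∀ s : ℝ, s ∈ Set.Icc (0:ℝ) 1 → ‖h (s, y) - h (s, 0)‖ < ε / 3 := fun s hs =>
    hδ _ ⟨hs, hyI⟩ _ ⟨hs, h0I⟩ (hnorm s)
  set v := midpoint ℝ (h (x, 0)) (h (x', 0))
  -- distance from v to h(t,0)
  have hmid : ‖v - h (t, y)‖ < ε / 3 := by
    rw [heq]
    have : v - midpoint ℝ (h (x, y)) (h (x', y))
        = midpoint ℝ (h (x, 0) - h (x, y)) (h (x', 0) - h (x', y)) := by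
      show midpoint ℝ (h (x, 0)) (h (x', 0)) - _ = _
      simp only [midpoint_eq_smul_add]
      module
    rw [this, midpoint_eq_smul_add]
    have h1 : ‖h (x, 0) - h (x, y)‖ < ε / 3 := by
      have := key x hx; rw [← norm_neg]; simpa [neg_sub] using this
    have h2 : ‖h (x', 0) - h (x', y)‖ < ε / 3 := by
      have := key x' hx'; rw [← norm_neg]; simpa [neg_sub] using this
    calc ‖(2:ℝ)⁻¹ • (h (x, 0) - h (x, y) + (h (x', 0) - h (x', y)))‖
        ≤ (2:ℝ)⁻¹ * (‖h (x, 0) - h (x, y)‖ + ‖h (x', 0) - h (x', y)‖) := by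
          rw [norm_smul]
          gcongr
          · norm_num
          · exact norm_add_le _ _
      _ < (2:ℝ)⁻¹ * (ε / 3 + ε / 3) := by gcongr
      _ ≤ ε / 3 := by linarith
  have ht0 : ‖h (t, y) - h (t, 0)‖ < ε / 3 := key t ht
  have hd : dist v (h (t, 0)) < ε := by
    calc dist v (h (t, 0)) ≤ dist v (h (t, y)) + dist (h (t, y)) (h (t, 0)) :=
      dist_triangle _ _ _
    _ < ε / 3 + ε / 3 := by
        rw [dist_eq_norm, dist_eq_norm]; exact add_lt_add hmid ht0
    _ ≤ ε := by linarith
  have hmem : h (t, 0) ∈ h '' (Set.Icc (0:ℝ) 1 ×ˢ ({0} : Set ℝ)) :=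
    ⟨(t, 0), ⟨ht, rfl⟩, rfl⟩
  have hle : ε ≤ dist v (h (t, 0)) := by
    rw [hε]; exact Metric.infDist_le_dist_of_mem hmem
  linarith
end

section
/- The map h(x,y) = ((x+1)/(y+1), 2y/(y+1)) maps every line segment contained in the closed unit square [0,1]² to a line segment, maps the unit square bijectively onto the trapezoid with vertices (1,0), (2,0), (1,1), (1/2,1), and is not an affine map. -/
lemma frac0 (x1 y1 x2 y2 t1 t2 : ℝ) (h1 : y1 ≠ 0) (h2 : y2 ≠ 0)
    (hD : t1*y1 + t2*y2 ≠ 0) :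
    t1*y1/(t1*y1+t2*y2) * (x1/y1) + t2*y2/(t1*y1+t2*y2) * (x2/y2)
      = (t1*x1+t2*x2)/(t1*y1+t2*y2) := by
  field_simp

lemma key (a b : ℝ × ℝ) (ha : 0 ≤ a.2) (hb : 0 ≤ b.2)
    (t1 t2 : ℝ) (ht1 : 0 ≤ t1) (ht2 : 0 ≤ t2) (hts : t1 + t2 = 1) :
    (((t1 • a + t2 • b).1 + 1) / ((t1 • a + t2 • b).2 + 1),
     2 * (t1 • a + t2 • b).2 / ((t1 • a + t2 • b).2 + 1)) =
    (t1 * (a.2+1) / (t1*(a.2+1)+t2*(b.2+1))) • ((a.1+1)/(a.2+1), 2*a.2/(a.2+1)) +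
    (t2 * (b.2+1) / (t1*(a.2+1)+t2*(b.2+1))) • ((b.1+1)/(b.2+1), 2*b.2/(b.2+1)) := by
  have hD : (1:ℝ) ≤ t1*(a.2+1)+t2*(b.2+1) := by nlinarith
  have hD0 : t1*(a.2+1)+t2*(b.2+1) ≠ 0 := by linarith
  have ha1 : a.2 + 1 ≠ 0 := by linarith
  have hb1 : b.2 + 1 ≠ 0 := by linarith
  have hden : (t1 • a + t2 • b).2 = t1 * a.2 + t2 * b.2 := by
    simp [Prod.smul_snd]
  have hnum : (t1 • a + t2 • b).1 = t1 * a.1 + t2 * b.1 := by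
    simp [Prod.smul_fst]
  apply Prod.ext
  · simp only [Prod.fst_add, Prod.smul_fst, smul_eq_mul, hnum, hden]
    rw [frac0 _ _ _ _ _ _ ha1 hb1 hD0]
    congr 1 <;> linarith
  · simp only [Prod.snd_add, Prod.smul_snd, smul_eq_mul, hnum, hden]
    rw [frac0 _ _ _ _ _ _ ha1 hb1 hD0]
    congr 1 <;> linarith

lemma convS : Convex ℝ {p : ℝ × ℝ | 0 ≤ p.2 ∧ p.2 ≤ 1 ∧ 2 ≤ 2*p.1 + p.2 ∧ p.1 + p.2 ≤ 2} := by
  rintro p ⟨h1, h2, h3, h4⟩ q ⟨g1, g2, g3, g4⟩ u v hu hv huv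
  refine ⟨?_, ?_, ?_, ?_⟩ <;>
    simp only [Prod.fst_add, Prod.snd_add, Prod.smul_fst, Prod.smul_snd, smul_eq_mul] <;>
    nlinarith

/-- The map `h(x,y) = ((x+1)/(y+1), 2y/(y+1))` maps every line segment contained in the
closed unit square to a line segment, maps the unit square bijectively onto the trapezoid
with vertices `(1,0)`, `(2,0)`, `(1,1)`, `(1/2,1)`, and is not (the restriction of) an
affine map. -/
theorem stmt7 (h : ℝ × ℝ → ℝ × ℝ)
    (hdef : ∀ p : ℝ × ℝ, h p = ((p.1 + 1) / (p.2 + 1), 2 * p.2 / (p.2 + 1))) :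
    (∀ a b : ℝ × ℝ, a ∈ Set.Icc (0:ℝ) 1 ×ˢ Set.Icc (0:ℝ) 1 →
        b ∈ Set.Icc (0:ℝ) 1 ×ˢ Set.Icc (0:ℝ) 1 →
        ∃ c d : ℝ × ℝ, h '' segment ℝ a b = segment ℝ c d) ∧
      Set.InjOn h (Set.Icc (0:ℝ) 1 ×ˢ Set.Icc (0:ℝ) 1) ∧
      h '' (Set.Icc (0:ℝ) 1 ×ˢ Set.Icc (0:ℝ) 1) =
        convexHull ℝ {((1:ℝ), (0:ℝ)), (2, 0), (1, 1), (1/2, 1)} ∧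
      ¬ ∃ (L : ℝ × ℝ →ₗ[ℝ] ℝ × ℝ) (b : ℝ × ℝ),
          ∀ p ∈ Set.Icc (0:ℝ) 1 ×ˢ Set.Icc (0:ℝ) 1, h p = L p + b := by
  refine ⟨?_, ?_, ?_, ?_⟩
  · -- segments to segments
    intro a b hamem hbmem
    obtain ⟨⟨_, _⟩, ha2, _⟩ := hamem
    obtain ⟨⟨_, _⟩, hb2, _⟩ := hbmem
    have ha1 : a.2 + 1 ≠ 0 := by linarith
    have hb1 : b.2 + 1 ≠ 0 := by linarith
    refine ⟨h a, h b, ?_⟩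
    ext z
    constructor
    · rintro ⟨p, ⟨t1, t2, ht1, ht2, hts, rfl⟩, rfl⟩
      have hD : (1:ℝ) ≤ t1*(a.2+1)+t2*(b.2+1) := by nlinarith
      refine ⟨t1*(a.2+1)/(t1*(a.2+1)+t2*(b.2+1)),
              t2*(b.2+1)/(t1*(a.2+1)+t2*(b.2+1)), ?_, ?_, ?_, ?_⟩
      · apply div_nonneg (by nlinarith) (by linarith)
      · apply div_nonneg (by nlinarith) (by linarith)
      · field_simp
      · rw [hdef a, hdef b, hdef (t1 • a + t2 • b)]
        exact (key a b ha2 hb2 t1 t2 ht1 ht2 hts).symm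
    · rintro ⟨s1, s2, hs1, hs2, hss, rfl⟩
      have hE : (1:ℝ) ≤ s1*(b.2+1)+s2*(a.2+1) := by nlinarith
      set E := s1*(b.2+1)+s2*(a.2+1) with hEdef
      have hE0 : E ≠ 0 := by linarith
      set t1 := s1*(b.2+1)/E with ht1def
      set t2 := s2*(a.2+1)/E with ht2def
      have ht1 : 0 ≤ t1 := div_nonneg (by nlinarith) (by linarith)
      have ht2 : 0 ≤ t2 := div_nonneg (by nlinarith) (by linarith)
      have hts : t1 + t2 = 1 := by rw [ht1def, ht2def]; field_simp; exact hEdef.symm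
      refine ⟨t1 • a + t2 • b, ⟨t1, t2, ht1, ht2, hts, rfl⟩, ?_⟩
      rw [hdef a, hdef b, hdef (t1 • a + t2 • b)]
      rw [key a b ha2 hb2 t1 t2 ht1 ht2 hts]
      have hD' : t1*(a.2+1)+t2*(b.2+1) = (a.2+1)*(b.2+1)/E := by
        rw [ht1def, ht2def]; field_simp
        linear_combination hss
      have hc1 : t1 * (a.2+1) / (t1*(a.2+1)+t2*(b.2+1)) = s1 := by
        rw [hD', ht1def]; field_simp
      have hc2 : t2 * (b.2+1) / (t1*(a.2+1)+t2*(b.2+1)) = s2 := by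
        rw [hD', ht2def]; field_simp
      rw [hc1, hc2]
  · -- injective
    rintro p ⟨⟨_, _⟩, hp2, hp2'⟩ q ⟨⟨_, _⟩, hq2, hq2'⟩ heq
    rw [hdef, hdef] at heq
    have hp1 : p.2 + 1 ≠ 0 := by linarith
    have hq1 : q.2 + 1 ≠ 0 := by linarith
    have h2 : 2 * p.2 / (p.2 + 1) = 2 * q.2 / (q.2 + 1) := congrArg Prod.snd heq
    have h1 : (p.1 + 1) / (p.2 + 1) = (q.1 + 1) / (q.2 + 1) := congrArg Prod.fst heq
    have hy : p.2 = q.2 := by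
      field_simp at h2
      nlinarith [h2]
    have hx : p.1 = q.1 := by
      rw [hy] at h1
      field_simp at h1
      linarith
    exact Prod.ext hx hy
  · -- image = trapezoid
    have himg : h '' (Set.Icc (0:ℝ) 1 ×ˢ Set.Icc (0:ℝ) 1)
        = {p : ℝ × ℝ | 0 ≤ p.2 ∧ p.2 ≤ 1 ∧ 2 ≤ 2*p.1 + p.2 ∧ p.1 + p.2 ≤ 2} := by
      ext z
      constructor
      · rintro ⟨p, ⟨⟨hx0, hx1⟩, hy0, hy1⟩, rfl⟩
        rw [hdef]
        have hd : (0:ℝ) < p.2 + 1 := by linarith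
        refine ⟨by positivity, ?_, ?_, ?_⟩
        · show 2 * p.2 / (p.2 + 1) ≤ 1
          rw [div_le_one hd]; linarith
        · have e : 2*((p.1+1)/(p.2+1)) + 2*p.2/(p.2+1) = (2*p.1+2+2*p.2)/(p.2+1) := by
            field_simp
          simp only [e]
          rw [le_div_iff₀ hd]; linarith
        · have e : (p.1+1)/(p.2+1) + 2*p.2/(p.2+1) = (p.1+1+2*p.2)/(p.2+1) := by
            field_simp
          simp only [e]
          rw [div_le_iff₀ hd]; linarith
      · rintro ⟨hv0, hv1, hl, hr⟩
        have h2 : (0:ℝ) < 2 - z.2 := by linarith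
        refine ⟨((2*z.1-2+z.2)/(2-z.2), z.2/(2-z.2)), ⟨⟨?_, ?_⟩, ?_, ?_⟩, ?_⟩
        · exact div_nonneg (by linarith) (by linarith)
        · rw [div_le_one h2]; linarith
        · exact div_nonneg hv0 (by linarith)
        · rw [div_le_one h2]; linarith
        · rw [hdef]
          have h2' : (2:ℝ) - z.2 ≠ 0 := ne_of_gt h2
          apply Prod.ext <;> simp only <;> (field_simp; try ring)
    rw [himg]
    apply le_antisymm
    · -- S ⊆ convexHull
      rintro p ⟨hv0, hv1, hl, hr⟩
      set V : Set (ℝ × ℝ) := {((1:ℝ), (0:ℝ)), (2, 0), (1, 1), (1/2, 1)} with hV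
      have hP : ((1 - p.2/2, p.2) : ℝ × ℝ) ∈ convexHull ℝ V := by
        apply segment_subset_convexHull (show ((1:ℝ),(0:ℝ)) ∈ V by simp [hV])
          (show ((1/2:ℝ),(1:ℝ)) ∈ V by simp [hV])
        exact ⟨1 - p.2, p.2, by linarith, hv0, by ring, by
          simp only [Prod.smul_mk, smul_eq_mul, Prod.mk_add_mk, Prod.mk.injEq]
          constructor <;> ring⟩
      have hQ : ((2 - p.2, p.2) : ℝ × ℝ) ∈ convexHull ℝ V := by
        apply segment_subset_convexHull (show ((2:ℝ),(0:ℝ)) ∈ V by simp [hV])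
          (show ((1:ℝ),(1:ℝ)) ∈ V by simp [hV])
        exact ⟨1 - p.2, p.2, by linarith, hv0, by ring, by
          simp only [Prod.smul_mk, smul_eq_mul, Prod.mk_add_mk, Prod.mk.injEq]
          constructor <;> ring⟩
      have hd : (0:ℝ) < 1 - p.2/2 := by linarith
      set θ : ℝ := (p.1 - 1 + p.2/2)/(1 - p.2/2) with hθ
      have hθ0 : 0 ≤ θ := div_nonneg (by linarith) (by linarith)
      have hθ1 : θ ≤ 1 := by rw [hθ, div_le_one hd]; linarith
      have hmem := (convex_convexHull ℝ V) hP hQ (by linarith : (0:ℝ) ≤ 1 - θ) hθ0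
        (by ring : (1 - θ) + θ = 1)
      have hpe : p = (1 - θ) • ((1 - p.2/2, p.2) : ℝ × ℝ) + θ • ((2 - p.2, p.2) : ℝ × ℝ) := by
        have hmul : θ * (1 - p.2/2) = p.1 - 1 + p.2/2 := div_mul_cancel₀ _ (ne_of_gt hd)
        simp only [Prod.smul_mk, smul_eq_mul, Prod.mk_add_mk]
        rw [Prod.ext_iff]
        constructor
        · simp only
          linear_combination -hmul
        · simp only
          ring
      rw [hpe]
      exact hmem
    · -- convexHull ⊆ S
      apply convexHull_min
      · rintro p hp
        simp only [Set.mem_insert_iff, Set.mem_singleton_iff] at hp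
        rcases hp with rfl | rfl | rfl | rfl <;>
          refine ⟨by norm_num, by norm_num, by norm_num, by norm_num⟩
      · exact convS
  · -- not affine
    rintro ⟨L, b, hL⟩
    have hmem : ∀ x y : ℝ, x ∈ Set.Icc (0:ℝ) 1 → y ∈ Set.Icc (0:ℝ) 1 →
        ((x, y) : ℝ × ℝ) ∈ Set.Icc (0:ℝ) 1 ×ˢ Set.Icc (0:ℝ) 1 := by
      intro x y hx hy; exact ⟨hx, hy⟩
    have e00 := hL (0,0) (hmem 0 0 (by norm_num) (by norm_num))
    have e10 := hL (1,0) (hmem 1 0 (by norm_num) (by norm_num))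
    have e01 := hL (0,1) (hmem 0 1 (by norm_num) (by norm_num))
    have e11 := hL (1,1) (hmem 1 1 (by norm_num) (by norm_num))
    rw [hdef] at e00 e10 e01 e11
    have hz : L (0,0) = 0 := by
      have e : ((0,0) : ℝ × ℝ) = (0 : ℝ × ℝ) := rfl
      rw [e, map_zero]
    have hadd : L (1,1) = L (1,0) + L (0,1) := by
      have e : ((1,1) : ℝ × ℝ) = (1,0) + (0,1) := by norm_num [Prod.ext_iff]
      rw [e, map_add]
    rw [hz] at e00
    rw [hadd] at e11
    have f00 := congrArg Prod.fst e00
    have f10 := congrArg Prod.fst e10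
    have f01 := congrArg Prod.fst e01
    have f11 := congrArg Prod.fst e11
    norm_num [Prod.fst_add] at f00 f10 f01 f11
    linarith
end

section
/- The inverse of an invertible half-plane-affine map of ℝ² is a half-plane-affine map. -/
/-- `α : ℝ² → ℝ²` is a half-plane-affine map: it is invertible and there is a half-plane
splitting `{f ≤ c}`, `{c ≤ f}` (with `f` a nonzero linear functional) on whose two closed
half-planes `α` agrees with affine maps `α₁`, `α₂` respectively. -/
def IsHalfPlaneAffine (α : ℝ × ℝ → ℝ × ℝ) : Prop :=
  Function.Bijective α ∧
    ∃ (f : ℝ × ℝ →ₗ[ℝ] ℝ) (c : ℝ), f ≠ 0 ∧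
      ∃ (α₁ α₂ : ℝ × ℝ →ᵃ[ℝ] ℝ × ℝ),
        (∀ p : ℝ × ℝ, f p ≤ c → α p = α₁ p) ∧ (∀ p : ℝ × ℝ, c ≤ f p → α p = α₂ p)

/-- An affine map agreeing with an injective map on a half-plane has injective linear part. -/
lemma half_inj (α : (ℝ × ℝ) ≃ (ℝ × ℝ)) (f : ℝ × ℝ →ₗ[ℝ] ℝ) (c : ℝ) (w : ℝ × ℝ)
    (hw : f w = 1) (α₁ : ℝ × ℝ →ᵃ[ℝ] ℝ × ℝ) (h₁ : ∀ p, f p ≤ c → α p = α₁ p) :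
    Function.Injective α₁.linear := by
  rw [← LinearMap.ker_eq_bot, LinearMap.ker_eq_bot']
  intro v hv
  set p : ℝ × ℝ := (min c (c - f v)) • w with hp
  have hfp : f p = min c (c - f v) := by simp [hp, hw]
  have h1 : f p ≤ c := by rw [hfp]; exact min_le_left _ _
  have h2 : f (v + p) ≤ c := by
    rw [map_add, hfp]
    have := min_le_right c (c - f v)
    linarith
  have hvadd : α₁ (v + p) = α₁ p := by
    have := α₁.map_vadd p v
    simpa [hv] using this
  have : α (v + p) = α p := by rw [h₁ _ h2, h₁ _ h1, hvadd]
  have := α.injective this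
  simpa using this

/-- An affine functional constant on the line `{f = c}` factors through `f - c`. -/
lemma affine_factor (k : (ℝ × ℝ) →ᵃ[ℝ] ℝ) (f : ℝ × ℝ →ₗ[ℝ] ℝ) (c c' : ℝ) (w : ℝ × ℝ)
    (hw : f w = 1) (h0 : ∀ x, f x = c → k x = c') :
    ∀ x, k x = c' + (f x - c) * k.linear w := by
  intro x
  have hx' : f (x - (f x - c) • w) = c := by
    simp [map_sub, map_smul, hw]
  have hxeq : (f x - c) • w +ᵥ (x - (f x - c) • w) = x := by
    simp [vadd_eq_add]
  calc k x = k ((f x - c) • w +ᵥ (x - (f x - c) • w)) := by rw [hxeq]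
    _ = k.linear ((f x - c) • w) +ᵥ k (x - (f x - c) • w) := k.map_vadd _ _
    _ = c' + (f x - c) * k.linear w := by
        rw [h0 _ hx', map_smul]
        simp [vadd_eq_add, smul_eq_mul]
        ring

/-- The inverse of an invertible half-plane-affine map of `ℝ²` is a half-plane-affine map. -/
theorem stmt8 (α : (ℝ × ℝ) ≃ (ℝ × ℝ)) (hα : IsHalfPlaneAffine ⇑α) :
    IsHalfPlaneAffine ⇑α.symm := by
  obtain ⟨-, f, c, hf, α₁, α₂, h₁, h₂⟩ := hα
  -- a vector on which f takes value 1
  obtain ⟨u, hu⟩ : ∃ u, f u ≠ 0 := by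
    by_contra h
    push_neg at h
    exact hf (LinearMap.ext fun x => by simp [h])
  set w : ℝ × ℝ := (f u)⁻¹ • u with hwdef
  have hw : f w = 1 := by simp [hwdef, map_smul, inv_mul_cancel₀ hu]
  -- α₁ and α₂ are bijective
  have hinj₁ : Function.Injective α₁.linear := half_inj α f c w hw α₁ h₁
  have hinj₂ : Function.Injective α₂.linear := by
    refine half_inj α (-f) (-c) (-w) (by simp [hw]) α₂ ?_
    intro p hp
    exact h₂ p (by simpa using hp)
  have hb₁ : Function.Bijective α₁ :=
    α₁.linear_bijective_iff.mp ⟨hinj₁, (LinearMap.injective_iff_surjective).mp hinj₁⟩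
  have hb₂ : Function.Bijective α₂ :=
    α₂.linear_bijective_iff.mp ⟨hinj₂, (LinearMap.injective_iff_surjective).mp hinj₂⟩
  set e₁ : (ℝ × ℝ) ≃ᵃ[ℝ] (ℝ × ℝ) := AffineEquiv.ofBijective hb₁ with he₁
  set e₂ : (ℝ × ℝ) ≃ᵃ[ℝ] (ℝ × ℝ) := AffineEquiv.ofBijective hb₂ with he₂
  have he₁app : ∀ x, e₁ x = α₁ x := fun x => rfl
  have he₂app : ∀ x, e₂ x = α₂ x := fun x => rfl
  -- the affine functional k x = f (e₁.symm (α₂ x))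
  set k : (ℝ × ℝ) →ᵃ[ℝ] ℝ := f.toAffineMap.comp (e₁.symm.toAffineMap.comp α₂) with hk
  have hkapp : ∀ x, k x = f (e₁.symm (α₂ x)) := fun x => rfl
  have hk0 : ∀ x, f x = c → k x = c := by
    intro x hx
    have hx12 : α₂ x = e₁ x := by
      rw [he₁app, ← h₁ x hx.le, h₂ x hx.ge]
    rw [hkapp, hx12, e₁.symm_apply_apply, hx]
  set lam : ℝ := k.linear w with hlam
  have hkx : ∀ x, k x = c + (f x - c) * lam := affine_factor k f c c w hw hk0
  -- lam is positive
  have hlampos : 0 < lam := by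
    by_contra hle
    push_neg at hle
    have hall : ∀ x : ℝ × ℝ, f (e₁.symm (α x)) ≤ c := by
      intro x
      by_cases hx : f x ≤ c
      · rw [h₁ x hx, ← he₁app, e₁.symm_apply_apply]
        exact hx
      · push_neg at hx
        rw [h₂ x hx.le, ← hkapp, hkx x]
        nlinarith
    have := hall (α.symm (e₁ ((c + 1) • w)))
    rw [α.apply_symm_apply, e₁.symm_apply_apply, map_smul] at this
    simp [hw] at this
    linarith
  -- the new splitting functional
  set g : ℝ × ℝ →ₗ[ℝ] ℝ := f.comp (e₁.symm.linear : (ℝ × ℝ) ≃ₗ[ℝ] (ℝ × ℝ)).toLinearMap with hg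
  set d : ℝ := c - f (e₁.symm 0) with hd
  have hdec : ∀ y, f (e₁.symm y) = g y + f (e₁.symm 0) := by
    intro y
    have h := e₁.symm.toAffineMap.map_vadd (0 : ℝ × ℝ) y
    simp only [vadd_eq_add, add_zero, AffineEquiv.coe_toAffineMap] at h
    rw [h, map_add]
    rfl
  have hgd : ∀ y, (g y ≤ d ↔ f (e₁.symm y) ≤ c) := by
    intro y; rw [hdec y, hd]; constructor <;> intro <;> linarith
  have hgd' : ∀ y, (d ≤ g y ↔ c ≤ f (e₁.symm y)) := by
    intro y; rw [hdec y, hd]; constructor <;> intro <;> linarith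
  refine ⟨α.symm.bijective, g, d, ?_, e₁.symm.toAffineMap, e₂.symm.toAffineMap, ?_, ?_⟩
  · -- g ≠ 0
    intro hg0
    apply hu
    have hz : ∀ z : ℝ × ℝ, f z = f (e₁.symm 0) := by
      intro z
      have := hdec (e₁ z)
      rw [e₁.symm_apply_apply, hg0] at this
      simpa using this
    have h1 := hz u
    have h2 := hz 0
    rw [map_zero] at h2
    rw [h1, ← h2]
  · -- first half-plane
    intro y hy
    set x := α.symm y with hx
    have hxy : α x = y := α.apply_symm_apply y
    by_cases hfx : f x ≤ c
    · have : y = e₁ x := by rw [← hxy, h₁ x hfx, he₁app]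
      rw [AffineEquiv.coe_toAffineMap, this, e₁.symm_apply_apply]
    · exfalso
      push_neg at hfx
      have hy2 : y = α₂ x := by rw [← hxy, h₂ x hfx.le]
      have : f (e₁.symm y) ≤ c := (hgd y).mp hy
      rw [hy2, ← hkapp, hkx x] at this
      nlinarith
  · -- second half-plane
    intro y hy
    set x := α.symm y with hx
    have hxy : α x = y := α.apply_symm_apply y
    by_cases hfx : c ≤ f x
    · have : y = e₂ x := by rw [← hxy, h₂ x hfx, he₂app]
      rw [AffineEquiv.coe_toAffineMap, this, e₂.symm_apply_apply]
    · exfalso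
      push_neg at hfx
      have hy1 : y = e₁ x := by rw [← hxy, h₁ x hfx.le, he₁app]
      have : c ≤ f (e₁.symm y) := (hgd' y).mp hy
      rw [hy1, e₁.symm_apply_apply] at this
      linarith
end

section
/- Let α be an invertible half-plane-affine map of ℝ². For any finite list S = [x₀,…,xₙ] of points in ℝ² with image list Ŝ = [α(x₀),…,α(xₙ)], the variation factors satisfy (1/2)·vf(S) ≤ vf(Ŝ) ≤ 2·vf(S). -/
set_option maxHeartbeats 1000000


/-- `[x i, x (i+1)]` is a crossing segment of the list `x₀, …, xₙ` on the line
`{p | g p = c}` (where `g` is a nonzero linear functional). -/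
def IsCrossing {n : ℕ} (x : Fin (n + 1) → ℝ × ℝ) (g : ℝ × ℝ →ₗ[ℝ] ℝ) (c : ℝ)
    (i : Fin n) : Prop :=
  (g (x i.castSucc) < c ∧ c < g (x i.succ)) ∨
  (g (x i.succ) < c ∧ c < g (x i.castSucc)) ∨
  ((i : ℕ) = 0 ∧ g (x i.castSucc) = c) ∨
  (0 < (i : ℕ) ∧ g (x i.castSucc) = c ∧
    g (x ⟨(i : ℕ) - 1, lt_of_le_of_lt (Nat.sub_le _ _) (Nat.lt_succ_of_lt i.isLt)⟩) ≠ c) ∨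
  ((i : ℕ) = n - 1 ∧ g (x i.castSucc) ≠ c ∧ g (x i.succ) = c)

/-- `vf(S, ℓ)`: the number of crossing segments of the list on the line `{p | g p = c}`. -/
noncomputable def vfOn {n : ℕ} (x : Fin (n + 1) → ℝ × ℝ) (g : ℝ × ℝ →ₗ[ℝ] ℝ) (c : ℝ) : ℕ :=
  {i : Fin n | IsCrossing x g c i}.ncard

/-- `vf(S)`: the variation factor of the list, the maximum of `vf(S, ℓ)` over all lines. -/
noncomputable def vf {n : ℕ} (x : Fin (n + 1) → ℝ × ℝ) : ℕ :=
  sSup {k : ℕ | ∃ (g : ℝ × ℝ →ₗ[ℝ] ℝ) (c : ℝ), g ≠ 0 ∧ k = vfOn x g c}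

/-- `cvar(f, S)`: the curve variation of `f` along the list. -/
noncomputable def cvar {n : ℕ} (f : ℝ × ℝ → ℂ) (x : Fin (n + 1) → ℝ × ℝ) : ℝ :=
  ∑ i : Fin n, ‖f (x i.succ) - f (x i.castSucc)‖

/-- The set of quotients `cvar(f,S)/vf(S)` over finite lists `S` in `σ`. -/
def varSet (f : ℝ × ℝ → ℂ) (σ : Set (ℝ × ℝ)) : Set ℝ :=
  {r : ℝ | ∃ (n : ℕ) (x : Fin (n + 1) → ℝ × ℝ), (∀ i, x i ∈ σ) ∧ r = cvar f x / (vf x : ℝ)}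

/-- `var(f, σ)`: the two-dimensional variation of `f` on `σ`. -/
noncomputable def var2 (f : ℝ × ℝ → ℂ) (σ : Set (ℝ × ℝ)) : ℝ :=
  sSup (varSet f σ)

namespace Stmt13Aux


open Set

/-- predecessor position -/
def prev {n : ℕ} (j : Fin (n + 1)) : Fin (n + 1) :=
  ⟨(j : ℕ) - 1, lt_of_le_of_lt (Nat.sub_le _ _) j.isLt⟩

/-- Event set: positions where the sign sequence of `d` (relative to level 0)
either starts a zero-run or strictly flips into/over zero. -/
def EvSet {n : ℕ} (d : Fin (n + 1) → ℝ) : Set (Fin (n + 1)) :=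
  {j | ((j : ℕ) = 0 ∧ d j = 0) ∨
    (0 < (j : ℕ) ∧ d (prev j) ≠ 0 ∧
      ((d (prev j) < 0 ∧ 0 ≤ d j) ∨ (0 < d (prev j) ∧ d j ≤ 0)))}

lemma evset_subset {n : ℕ} (d a b φ : Fin (n + 1) → ℝ) (l : ℝ)
    (hab : ∀ j, b j = a j - l * φ j)
    (hda : ∀ j, φ j ≤ 0 → d j = a j)
    (hdb : ∀ j, 0 ≤ φ j → d j = b j) :
    EvSet d ⊆ EvSet a ∪ EvSet b := by
  intro j hj
  rcases hj with ⟨hj0, hd0⟩ | ⟨hj0, hdp, hev⟩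
  · rcases le_total (φ j) 0 with h | h
    · exact Or.inl (Or.inl ⟨hj0, by rw [← hda j h]; exact hd0⟩)
    · exact Or.inr (Or.inl ⟨hj0, by rw [← hdb j h]; exact hd0⟩)
  · set p := prev j with hp
    have key : (a p - b p) * φ j = (a j - b j) * φ p := by
      rw [hab p, hab j]; ring
    rcases le_or_gt (φ p) 0 with hφp | hφp <;> rcases le_or_gt (φ j) 0 with hφj | hφj
    · -- both in H₁ : event for a
      rw [hda p hφp] at hdp hev; rw [hda j hφj] at hev
      exact Or.inl (Or.inr ⟨hj0, hdp, hev⟩)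
    · -- φ p ≤ 0 < φ j
      rw [hda p hφp] at hdp hev; rw [hdb j hφj.le] at hev
      rcases hev with ⟨h1, h2⟩ | ⟨h1, h2⟩
      · rcases le_or_gt 0 (a j) with h3 | h3
        · exact Or.inl (Or.inr ⟨hj0, hdp, Or.inl ⟨h1, h3⟩⟩)
        · -- b-event : b p < 0 ≤ b j
          refine Or.inr (Or.inr ⟨hj0, ?_, Or.inl ⟨?_, h2⟩⟩)
          all_goals nlinarith [key]
      · rcases le_or_gt (a j) 0 with h3 | h3
        · exact Or.inl (Or.inr ⟨hj0, hdp, Or.inr ⟨h1, h3⟩⟩)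
        · refine Or.inr (Or.inr ⟨hj0, ?_, Or.inr ⟨?_, h2⟩⟩)
          all_goals nlinarith [key]
    · -- 0 < φ p, φ j ≤ 0
      rw [hdb p hφp.le] at hdp hev; rw [hda j hφj] at hev
      rcases hev with ⟨h1, h2⟩ | ⟨h1, h2⟩
      · rcases le_or_gt 0 (b j) with h3 | h3
        · exact Or.inr (Or.inr ⟨hj0, hdp, Or.inl ⟨h1, h3⟩⟩)
        · refine Or.inl (Or.inr ⟨hj0, ?_, Or.inl ⟨?_, h2⟩⟩)
          all_goals nlinarith [key]
      · rcases le_or_gt (b j) 0 with h3 | h3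
        · exact Or.inr (Or.inr ⟨hj0, hdp, Or.inr ⟨h1, h3⟩⟩)
        · refine Or.inl (Or.inr ⟨hj0, ?_, Or.inr ⟨?_, h2⟩⟩)
          all_goals nlinarith [key]
    · rw [hdb p hφp.le] at hdp hev; rw [hdb j hφj.le] at hev
      exact Or.inr (Or.inr ⟨hj0, hdp, hev⟩)

open Classical in
/-- from event positions to crossing segments -/
noncomputable def psi {n : ℕ} (hn : 0 < n) (d : Fin (n + 1) → ℝ) (j : Fin (n + 1)) : Fin n :=
  if h : (j : ℕ) < n ∧ d j = 0 then ⟨(j : ℕ), h.1⟩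
  else ⟨(j : ℕ) - 1, by have := j.isLt; omega⟩

lemma vfOn_eq {n : ℕ} (hn : 0 < n) (x : Fin (n + 1) → ℝ × ℝ) (g : ℝ × ℝ →ₗ[ℝ] ℝ) (c : ℝ) :
    vfOn x g c = (EvSet (fun j => g (x j) - c)).ncard := by
  classical
  set d : Fin (n + 1) → ℝ := fun j => g (x j) - c with hd
  have hcross : ∀ i : Fin n, IsCrossing x g c i ↔
      ((d i.castSucc < 0 ∧ 0 < d i.succ) ∨
       (d i.succ < 0 ∧ 0 < d i.castSucc) ∨
       ((i : ℕ) = 0 ∧ d i.castSucc = 0) ∨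
       (0 < (i : ℕ) ∧ d i.castSucc = 0 ∧
         d ⟨(i : ℕ) - 1, lt_of_le_of_lt (Nat.sub_le _ _) (Nat.lt_succ_of_lt i.isLt)⟩ ≠ 0) ∨
       ((i : ℕ) = n - 1 ∧ d i.castSucc ≠ 0 ∧ d i.succ = 0)) := by
    intro i
    simp only [IsCrossing, hd, sub_neg, sub_pos, sub_eq_zero, sub_ne_zero]
  have hbij : Set.BijOn (psi hn d) (EvSet d) {i : Fin n | IsCrossing x g c i} := by
    refine ⟨?_, ?_, ?_⟩
    · -- MapsTo
      intro j hj
      simp only [Set.mem_setOf_eq, hcross]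
      unfold psi
      split_ifs with h
      · rcases hj with ⟨hj0, hdj⟩ | ⟨hj0, hdp, hev⟩
        · refine Or.inr (Or.inr (Or.inl ⟨by simpa using hj0, ?_⟩))
          have : (⟨(j : ℕ), h.1⟩ : Fin n).castSucc = j := by
            apply Fin.ext; simp
          rw [this]; exact hdj
        · refine Or.inr (Or.inr (Or.inr (Or.inl ⟨by simpa using hj0, ?_, ?_⟩)))
          · have : (⟨(j : ℕ), h.1⟩ : Fin n).castSucc = j := by apply Fin.ext; simp
            rw [this]; exact h.2
          · have : (⟨(((⟨(j : ℕ), h.1⟩ : Fin n) : ℕ)) - 1, lt_of_le_of_lt (Nat.sub_le _ _) (Nat.lt_succ_of_lt h.1)⟩ : Fin (n+1)) = prev j := by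
              apply Fin.ext; simp [prev]
            rw [this]; exact hdp
      · rcases hj with ⟨hj0, hdj⟩ | ⟨hj0, hdp, hev⟩
        · exact absurd ⟨by omega, hdj⟩ h
        · by_cases hdj : d j = 0
          · have hnlt : ¬ ((j : ℕ) < n) := fun hlt => h ⟨hlt, hdj⟩
            have hjn : (j : ℕ) = n := by have := j.isLt; omega
            refine Or.inr (Or.inr (Or.inr (Or.inr ⟨by simp [hjn], ?_, ?_⟩)))
            · have : ((⟨(j : ℕ) - 1, by omega⟩ : Fin n)).castSucc = prev j := by
                apply Fin.ext; simp [prev]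
              rw [this]; exact hdp
            · have : ((⟨(j : ℕ) - 1, by omega⟩ : Fin n)).succ = j := by
                apply Fin.ext; simp; omega
              rw [this]; exact hdj
          · have e1 : ((⟨(j : ℕ) - 1, by omega⟩ : Fin n)).castSucc = prev j := by
              apply Fin.ext; simp [prev]
            have e2 : ((⟨(j : ℕ) - 1, by omega⟩ : Fin n)).succ = j := by
              apply Fin.ext; simp; omega
            rcases hev with ⟨h1, h2⟩ | ⟨h1, h2⟩
            · exact Or.inl ⟨by rw [e1]; exact h1, by rw [e2]; exact lt_of_le_of_ne h2 (Ne.symm hdj)⟩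
            · exact Or.inr (Or.inl ⟨by rw [e2]; exact lt_of_le_of_ne h2 hdj, by rw [e1]; exact h1⟩)
    · -- InjOn
      intro j hj j' hj' heq
      unfold psi at heq
      have hne0 : ∀ k : Fin (n+1), k ∈ EvSet d → ¬((k : ℕ) < n ∧ d k = 0) → 0 < (k : ℕ) := by
        intro k hk hnk
        rcases hk with ⟨hk0, hdk⟩ | ⟨hk0, _, _⟩
        · exact absurd ⟨by omega, hdk⟩ hnk
        · exact hk0
      have hpne : ∀ k : Fin (n+1), k ∈ EvSet d → 0 < (k : ℕ) → d (prev k) ≠ 0 := by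
        intro k hk hk0
        rcases hk with ⟨hk0', _⟩ | ⟨_, hdk, _⟩
        · omega
        · exact hdk
      split_ifs at heq with h h' h'
      · apply Fin.ext
        have := congrArg Fin.val heq; simpa using this
      · exfalso
        have hj'0 : 0 < (j' : ℕ) := hne0 j' hj' h'
        have := hpne j' hj' hj'0
        have hval : (j : ℕ) = (j' : ℕ) - 1 := by
          have := congrArg Fin.val heq; simpa using this
        have : d (prev j') = 0 := by
          have : prev j' = j := by apply Fin.ext; simp [prev, ← hval]
          rw [this]; exact h.2
        exact hpne j' hj' hj'0 this
      · exfalso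
        have hj0 : 0 < (j : ℕ) := hne0 j hj h
        have hval : (j : ℕ) - 1 = (j' : ℕ) := by
          have := congrArg Fin.val heq; simpa using this
        have : d (prev j) = 0 := by
          have : prev j = j' := by apply Fin.ext; simp [prev, hval]
          rw [this]; exact h'.2
        exact hpne j hj hj0 this
      · have hj0 : 0 < (j : ℕ) := hne0 j hj h
        have hj'0 : 0 < (j' : ℕ) := hne0 j' hj' h'
        have hval : (j : ℕ) - 1 = (j' : ℕ) - 1 := by
          have := congrArg Fin.val heq; simpa using this
        apply Fin.ext; omega
    · -- SurjOn
      intro i hi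
      simp only [Set.mem_setOf_eq, hcross] at hi
      rcases hi with ⟨h1, h2⟩ | ⟨h1, h2⟩ | ⟨h1, h2⟩ | ⟨h1, h2, h3⟩ | ⟨h1, h2, h3⟩
      · refine ⟨i.succ, Or.inr ⟨by simp, ?_, Or.inl ⟨?_, h2.le⟩⟩, ?_⟩
        · have : prev i.succ = i.castSucc := by apply Fin.ext; simp [prev]
          rw [this]; exact h1.ne
        · have : prev i.succ = i.castSucc := by apply Fin.ext; simp [prev]
          rw [this]; exact h1
        · unfold psi
          rw [dif_neg (by push_neg; intro _; exact h2.ne')]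
          apply Fin.ext; simp
      · refine ⟨i.succ, Or.inr ⟨by simp, ?_, Or.inr ⟨?_, h1.le⟩⟩, ?_⟩
        · have : prev i.succ = i.castSucc := by apply Fin.ext; simp [prev]
          rw [this]; exact h2.ne'
        · have : prev i.succ = i.castSucc := by apply Fin.ext; simp [prev]
          rw [this]; exact h2
        · unfold psi
          rw [dif_neg (by push_neg; intro _; exact h1.ne)]
          apply Fin.ext; simp
      · refine ⟨i.castSucc, Or.inl ⟨by simpa using h1, h2⟩, ?_⟩
        unfold psi
        rw [dif_pos ⟨by simpa using i.isLt, h2⟩]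
        apply Fin.ext; simp
      · refine ⟨i.castSucc, Or.inr ⟨by simpa using h1, ?_, ?_⟩, ?_⟩
        · have : prev i.castSucc = ⟨(i : ℕ) - 1, lt_of_le_of_lt (Nat.sub_le _ _) (Nat.lt_succ_of_lt i.isLt)⟩ := by
            apply Fin.ext; simp [prev]
          rw [this]; exact h3
        · have hpe : prev i.castSucc = ⟨(i : ℕ) - 1, lt_of_le_of_lt (Nat.sub_le _ _) (Nat.lt_succ_of_lt i.isLt)⟩ := by
            apply Fin.ext; simp [prev]
          rcases lt_or_gt_of_ne h3 with hlt | hgt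
          · exact Or.inl ⟨by rw [hpe]; exact hlt, le_of_eq h2.symm⟩
          · exact Or.inr ⟨by rw [hpe]; exact hgt, le_of_eq h2⟩
        · unfold psi
          rw [dif_pos ⟨by simpa using i.isLt, by simpa using h2⟩]
          apply Fin.ext; simp
      · refine ⟨i.succ, Or.inr ⟨by simp, ?_, ?_⟩, ?_⟩
        · have : prev i.succ = i.castSucc := by apply Fin.ext; simp [prev]
          rw [this]; exact h2
        · have hpe : prev i.succ = i.castSucc := by apply Fin.ext; simp [prev]
          rcases lt_or_gt_of_ne h2 with hlt | hgt
          · exact Or.inl ⟨by rw [hpe]; exact hlt, le_of_eq h3.symm⟩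
          · exact Or.inr ⟨by rw [hpe]; exact hgt, le_of_eq h3⟩
        · unfold psi
          have : ¬((i.succ : ℕ) < n ∧ d i.succ = 0) := by
            push_neg; intro hlt
            exfalso; simp at hlt; omega
          rw [dif_neg this]
          apply Fin.ext; simp [h1]
      
  rw [vfOn, ← hbij.image_eq, Set.ncard_image_of_injOn hbij.injOn]



/-- An affine functional (given by linear part `L` and constant `d0`) vanishing on the
line `{p | h p = c}` is proportional to `h - c`. -/
lemma vanish_prop (h : ℝ × ℝ →ₗ[ℝ] ℝ) (c : ℝ) (hh : h ≠ 0)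
    (L : ℝ × ℝ →ₗ[ℝ] ℝ) (d0 : ℝ) (hv : ∀ p, h p = c → L p + d0 = 0) :
    ∃ l : ℝ, ∀ p, L p + d0 = l * (h p - c) := by
  obtain ⟨v, hv0⟩ : ∃ v, h v ≠ 0 := by
    by_contra h'
    push_neg at h'
    exact hh (LinearMap.ext fun p => by simp [h' p])
  set e : ℝ × ℝ := (h v)⁻¹ • v with he_def
  have he : h e = 1 := by
    simp [he_def, inv_mul_cancel₀ hv0]
  refine ⟨L e, fun p => ?_⟩
  have hq : h (p - (h p - c) • e) = c := by
    simp [map_sub, map_smul, he]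
  have h0 := hv _ hq
  have h1 : L p - (h p - c) * L e + d0 = 0 := by
    simpa [map_sub, map_smul] using h0
  linear_combination h1

/-- decomposition of an affine self-map of a vector space -/
lemma aff_apply (β : ℝ × ℝ →ᵃ[ℝ] ℝ × ℝ) (p : ℝ × ℝ) : β p = β.linear p + β 0 := by
  have := β.map_vadd (0 : ℝ × ℝ) p
  simpa using this

/-- If an injective map agrees with an affine map on a half-plane, the affine map's
linear part is bijective. -/
lemma linear_bij (α : ℝ × ℝ → ℝ × ℝ) (hinj : Function.Injective α)
    (f : ℝ × ℝ →ₗ[ℝ] ℝ) (c0 : ℝ) (hf : f ≠ 0) (β : ℝ × ℝ →ᵃ[ℝ] ℝ × ℝ)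
    (h : ∀ p, f p ≤ c0 → α p = β p) : Function.Bijective β.linear := by
  have hinj' : Function.Injective β.linear := by
    rw [injective_iff_map_eq_zero]
    intro w hw
    by_contra hw0
    obtain ⟨v, hv0⟩ : ∃ v, f v ≠ 0 := by
      by_contra h'
      push_neg at h'
      exact hf (LinearMap.ext fun p => by simp [h' p])
    set e : ℝ × ℝ := (f v)⁻¹ • v with he_def
    have he : f e = 1 := by simp [he_def, inv_mul_cancel₀ hv0]
    set p : ℝ × ℝ := (c0 - max (f w) 0) • e with hp_def
    have hp1 : f p ≤ c0 := by
      simp [hp_def, he]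
    have hp2 : f (w + p) ≤ c0 := by
      simp [hp_def, map_add, he]
      have := le_max_left (f w) 0
      linarith
    have e1 : α p = β p := h p hp1
    have e2 : α (w + p) = β (w + p) := h _ hp2
    have e3 : β (w + p) = β p := by
      have := β.map_vadd p w
      simp only [vadd_eq_add] at this
      rw [this, hw]
      simp
    have : w + p = p := hinj (by rw [e1, e2, e3])
    exact hw0 (by simpa using this)
  exact ⟨hinj', (LinearMap.injective_iff_surjective).mp hinj'⟩

lemma comp_ne_zero (g : ℝ × ℝ →ₗ[ℝ] ℝ) (hg : g ≠ 0) (A : ℝ × ℝ →ₗ[ℝ] ℝ × ℝ)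
    (hA : Function.Surjective A) : g.comp A ≠ 0 := by
  intro h
  apply hg
  apply LinearMap.ext
  intro q
  obtain ⟨p, rfl⟩ := hA q
  have := congrArg (fun (F : ℝ × ℝ →ₗ[ℝ] ℝ) => F p) h
  simpa using this


lemma vfOn_bdd {m : ℕ} (y : Fin (m + 1) → ℝ × ℝ) :
    BddAbove {k : ℕ | ∃ (g : ℝ × ℝ →ₗ[ℝ] ℝ) (c : ℝ), g ≠ 0 ∧ k = vfOn y g c} := by
  refine ⟨m, ?_⟩
  rintro k ⟨g, c, -, rfl⟩
  have h1 : {i : Fin m | IsCrossing y g c i}.ncard ≤ (Set.univ : Set (Fin m)).ncard :=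
    Set.ncard_le_ncard (Set.subset_univ _) Set.finite_univ
  simpa [vfOn, Set.ncard_univ] using h1

lemma vf_le_two_mul (α : ℝ × ℝ → ℝ × ℝ) (hα : IsHalfPlaneAffine α)
    (n : ℕ) (x : Fin (n + 1) → ℝ × ℝ) :
    vf (fun i => α (x i)) ≤ 2 * vf x := by
  obtain ⟨hbij, f, c0, hf, α₁, α₂, h1, h2⟩ := hα
  have hA1 : Function.Bijective α₁.linear := linear_bij α hbij.1 f c0 hf α₁ h1
  have hA2 : Function.Bijective α₂.linear := by
    refine linear_bij α hbij.1 (-f) (-c0) (fun h => hf (by simpa [neg_eq_zero] using h)) α₂ ?_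
    intro p hp
    refine h2 p ?_
    have : -(f p) ≤ -c0 := by simpa using hp
    linarith
  apply csSup_le'
  rintro k ⟨g, c, hg, rfl⟩
  set g1 := g.comp α₁.linear with hg1_def
  set g2 := g.comp α₂.linear with hg2_def
  set c1 := c - g (α₁ 0) with hc1_def
  set c2 := c - g (α₂ 0) with hc2_def
  have hg1 : g1 ≠ 0 := comp_ne_zero g hg _ hA1.2
  have hg2 : g2 ≠ 0 := comp_ne_zero g hg _ hA2.2
  have ha : ∀ p : ℝ × ℝ, g1 p - c1 = g (α₁ p) - c := by
    intro p
    have := aff_apply α₁ p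
    rw [hg1_def, hc1_def]
    simp only [LinearMap.coe_comp, Function.comp_apply]
    rw [this, map_add]
    ring
  have hb : ∀ p : ℝ × ℝ, g2 p - c2 = g (α₂ p) - c := by
    intro p
    have := aff_apply α₂ p
    rw [hg2_def, hc2_def]
    simp only [LinearMap.coe_comp, Function.comp_apply]
    rw [this, map_add]
    ring
  have key : vfOn (fun i => α (x i)) g c ≤ vfOn x g1 c1 + vfOn x g2 c2 := by
    rcases Nat.eq_zero_or_pos n with rfl | hn
    · have hz : ∀ (y : Fin 1 → ℝ × ℝ) (g' : ℝ × ℝ →ₗ[ℝ] ℝ) (c' : ℝ), vfOn y g' c' = 0 := by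
        intro y g' c'
        rw [vfOn, Set.eq_empty_of_isEmpty ({i : Fin 0 | IsCrossing y g' c' i}), Set.ncard_empty]
      rw [hz, hz, hz]
    · obtain ⟨l, hl⟩ := vanish_prop f c0 hf (g.comp α₁.linear - g.comp α₂.linear)
        (g (α₁ 0) - g (α₂ 0)) (by
          intro p hp
          have e1 := h1 p hp.le
          have e2 := h2 p hp.ge
          have heq : α₁ p = α₂ p := by rw [← e1, ← e2]
          have q1 : g (α₁ p) = g (α₁.linear p) + g (α₁ 0) := by
            rw [aff_apply α₁ p, map_add]
          have q2 : g (α₂ p) = g (α₂.linear p) + g (α₂ 0) := by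
            rw [aff_apply α₂ p, map_add]
          simp only [LinearMap.sub_apply, LinearMap.coe_comp, Function.comp_apply]
          rw [heq] at q1
          linarith)
      have hl' : ∀ p : ℝ × ℝ, g (α₁ p) - g (α₂ p) = l * (f p - c0) := by
        intro p
        have := hl p
        simp only [LinearMap.sub_apply, LinearMap.coe_comp, Function.comp_apply] at this
        have q1 : g (α₁ p) = g (α₁.linear p) + g (α₁ 0) := by
          rw [aff_apply α₁ p, map_add]
        have q2 : g (α₂ p) = g (α₂.linear p) + g (α₂ 0) := by
          rw [aff_apply α₂ p, map_add]
        linarith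
      rw [vfOn_eq hn, vfOn_eq hn, vfOn_eq hn]
      refine le_trans (Set.ncard_le_ncard
        (evset_subset (fun j => g ((fun i => α (x i)) j) - c)
          (fun j => g1 (x j) - c1) (fun j => g2 (x j) - c2)
          (fun j => f (x j) - c0) l ?_ ?_ ?_) (Set.toFinite _))
        (Set.ncard_union_le _ _)
      · intro j
        show g2 (x j) - c2 = g1 (x j) - c1 - l * (f (x j) - c0)
        rw [ha, hb]
        have := hl' (x j)
        linarith
      · intro j hj
        show g (α (x j)) - c = g1 (x j) - c1
        have hfj : f (x j) ≤ c0 := by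
          have : f (x j) - c0 ≤ 0 := hj
          linarith
        rw [ha, h1 _ hfj]
      · intro j hj
        show g (α (x j)) - c = g2 (x j) - c2
        have hfj : c0 ≤ f (x j) := by
          have : 0 ≤ f (x j) - c0 := hj
          linarith
        rw [hb, h2 _ hfj]
  have le1 : vfOn x g1 c1 ≤ vf x := le_csSup (vfOn_bdd x) ⟨g1, c1, hg1, rfl⟩
  have le2 : vfOn x g2 c2 ≤ vf x := le_csSup (vfOn_bdd x) ⟨g2, c2, hg2, rfl⟩
  omega

lemma exists_one (f : ℝ × ℝ →ₗ[ℝ] ℝ) (hf : f ≠ 0) : ∃ e : ℝ × ℝ, f e = 1 := by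
  obtain ⟨v, hv0⟩ : ∃ v, f v ≠ 0 := by
    by_contra h'
    push_neg at h'
    exact hf (LinearMap.ext fun p => by simp [h' p])
  exact ⟨(f v)⁻¹ • v, by simp [inv_mul_cancel₀ hv0]⟩

/-- the affine inverse of an affine self-map with bijective linear part -/
noncomputable def affInv (β : ℝ × ℝ →ᵃ[ℝ] ℝ × ℝ) (hB : Function.Bijective β.linear) :
    ℝ × ℝ →ᵃ[ℝ] ℝ × ℝ where
  toFun := fun q => (LinearEquiv.ofBijective β.linear hB).symm (q - β 0)
  linear := ((LinearEquiv.ofBijective β.linear hB).symm : ℝ × ℝ →ₗ[ℝ] ℝ × ℝ)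
  map_vadd' := by
    intro p v
    simp only [vadd_eq_add, LinearEquiv.coe_coe]
    rw [add_sub_assoc, map_add]

lemma affInv_left (β : ℝ × ℝ →ᵃ[ℝ] ℝ × ℝ) (hB : Function.Bijective β.linear) (p : ℝ × ℝ) :
    affInv β hB (β p) = p := by
  show (LinearEquiv.ofBijective β.linear hB).symm (β p - β 0) = p
  have h : β p - β 0 = β.linear p := by
    rw [aff_apply β p]; ring
  rw [h]
  exact (LinearEquiv.ofBijective β.linear hB).symm_apply_apply p

lemma affInv_right (β : ℝ × ℝ →ᵃ[ℝ] ℝ × ℝ) (hB : Function.Bijective β.linear) (q : ℝ × ℝ) :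
    β (affInv β hB q) = q := by
  rw [aff_apply β (affInv β hB q)]
  show β.linear ((LinearEquiv.ofBijective β.linear hB).symm (q - β 0)) + β 0 = q
  have h : β.linear ((LinearEquiv.ofBijective β.linear hB).symm (q - β 0)) = q - β 0 :=
    (LinearEquiv.ofBijective β.linear hB).apply_symm_apply (q - β 0)
  rw [h]
  ring

lemma invFun_hpa (α : ℝ × ℝ → ℝ × ℝ) (hα : IsHalfPlaneAffine α) :
    IsHalfPlaneAffine (Function.invFun α) := by
  obtain ⟨hbij, f, c0, hf, α₁, α₂, h1, h2⟩ := hα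
  have hA1 : Function.Bijective α₁.linear := linear_bij α hbij.1 f c0 hf α₁ h1
  have hA2 : Function.Bijective α₂.linear := by
    refine linear_bij α hbij.1 (-f) (-c0) (fun h => hf (by simpa [neg_eq_zero] using h)) α₂ ?_
    intro p hp
    refine h2 p ?_
    have : -(f p) ≤ -c0 := by simpa using hp
    linarith
  set B1 := LinearEquiv.ofBijective α₁.linear hA1 with hB1_def
  set B2 := LinearEquiv.ofBijective α₂.linear hA2 with hB2_def
  set β₁ := affInv α₁ hA1 with hβ1_def
  set β₂ := affInv α₂ hA2 with hβ2_def
  -- value of f on the inverse maps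
  have k1 : ∀ q, f (β₁ q) = f (B1.symm q) - f (B1.symm (α₁ 0)) := by
    intro q
    show f (B1.symm (q - α₁ 0)) = _
    rw [map_sub, map_sub]
  have k2 : ∀ q, f (β₂ q) = f (B2.symm q) - f (B2.symm (α₂ 0)) := by
    intro q
    show f (B2.symm (q - α₂ 0)) = _
    rw [map_sub, map_sub]
  have hf' : f.comp (B1.symm : ℝ × ℝ →ₗ[ℝ] ℝ × ℝ) ≠ 0 :=
    comp_ne_zero f hf _ B1.symm.surjective
  -- proportionality of f∘β₂ - c0 and f∘β₁ - c0
  obtain ⟨l, hl⟩ := vanish_prop (f.comp (B1.symm : ℝ × ℝ →ₗ[ℝ] ℝ × ℝ))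
      (c0 + f (B1.symm (α₁ 0))) hf'
      (f.comp (B2.symm : ℝ × ℝ →ₗ[ℝ] ℝ × ℝ)) (-(f (B2.symm (α₂ 0))) - c0) (by
    intro q hq
    have hq1 : f (β₁ q) = c0 := by
      rw [k1 q]
      have : f (B1.symm q) = c0 + f (B1.symm (α₁ 0)) := hq
      linarith
    have hα12 : α₁ (β₁ q) = α₂ (β₁ q) := by
      rw [← h1 _ hq1.le, ← h2 _ hq1.ge]
    have hq2 : β₂ q = β₁ q := by
      have e1 : α₂ (β₁ q) = q := by rw [← hα12]; exact affInv_right α₁ hA1 q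
      calc β₂ q = β₂ (α₂ (β₁ q)) := by rw [e1]
        _ = β₁ q := affInv_left α₂ hA2 (β₁ q)
    have : f (β₂ q) = c0 := by rw [hq2, hq1]
    rw [k2 q] at this
    have h' : f (B2.symm q) = (f.comp (B2.symm : ℝ × ℝ →ₗ[ℝ] ℝ × ℝ)) q := rfl
    rw [← h']
    linarith)
  have hl' : ∀ q, f (β₂ q) - c0 = l * (f (β₁ q) - c0) := by
    intro q
    have := hl q
    have e1 : (f.comp (B1.symm : ℝ × ℝ →ₗ[ℝ] ℝ × ℝ)) q = f (B1.symm q) := rfl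
    have e2 : (f.comp (B2.symm : ℝ × ℝ →ₗ[ℝ] ℝ × ℝ)) q = f (B2.symm q) := rfl
    rw [e1, e2] at this
    rw [k1 q, k2 q]
    linarith
  -- positivity of l
  obtain ⟨e, he⟩ := exists_one f hf
  set p0 : ℝ × ℝ := (c0 + 1) • e with hp0_def
  have hfp0 : f p0 = c0 + 1 := by simp [hp0_def, he]
  have hlpos : 0 < l := by
    rcases lt_trichotomy l 0 with hneg | hzero | hpos
    · exfalso
      set q := α₁ p0 with hq_def
      have hb1 : f (β₁ q) = c0 + 1 := by
        rw [hq_def, affInv_left α₁ hA1 p0, hfp0]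
      have hb2 : f (β₂ q) - c0 = l * 1 := by
        rw [hl' q, hb1]; ring_nf
      obtain ⟨p, hp⟩ := hbij.2 q
      rcases le_total (f p) c0 with hple | hpge
      · have : α p = α₁ p := h1 p hple
        have hpq : β₁ q = p := by rw [← hp, this, affInv_left]
        rw [hpq] at hb1
        linarith
      · have : α p = α₂ p := h2 p hpge
        have hpq : β₂ q = p := by rw [← hp, this, affInv_left]
        rw [hpq] at hb2
        nlinarith
    · exfalso
      have := hl' (α₂ p0)
      rw [affInv_left α₂ hA2 p0, hfp0, hzero] at this
      linarith
    · exact hpos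
  refine ⟨?_, f.comp (B1.symm : ℝ × ℝ →ₗ[ℝ] ℝ × ℝ), c0 + f (B1.symm (α₁ 0)), hf',
    β₁, β₂, ?_, ?_⟩
  · exact Function.bijective_iff_has_inverse.mpr
      ⟨α, fun q => Function.rightInverse_invFun hbij.2 q,
        fun p => Function.leftInverse_invFun hbij.1 p⟩
  · intro q hq
    have hfb : f (β₁ q) ≤ c0 := by
      rw [k1 q]
      have : f (B1.symm q) ≤ c0 + f (B1.symm (α₁ 0)) := hq
      linarith
    have : α (β₁ q) = q := by rw [h1 _ hfb]; exact affInv_right α₁ hA1 q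
    conv_lhs => rw [← this]
    exact Function.leftInverse_invFun hbij.1 _
  · intro q hq
    have hfb1 : c0 ≤ f (β₁ q) := by
      rw [k1 q]
      have : c0 + f (B1.symm (α₁ 0)) ≤ f (B1.symm q) := hq
      linarith
    have hfb2 : c0 ≤ f (β₂ q) := by
      have := hl' q
      nlinarith
    have : α (β₂ q) = q := by rw [h2 _ hfb2]; exact affInv_right α₂ hA2 q
    conv_lhs => rw [← this]
    exact Function.leftInverse_invFun hbij.1 _

end Stmt13Aux

/-- For an invertible half-plane-affine map `α` and any finite list `S` of points of `ℝ²`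
with image list `Ŝ = α(S)`, the variation factors satisfy
`(1/2)·vf(S) ≤ vf(Ŝ) ≤ 2·vf(S)`. -/
theorem stmt13 (α : ℝ × ℝ → ℝ × ℝ) (hα : IsHalfPlaneAffine α)
    (n : ℕ) (x : Fin (n + 1) → ℝ × ℝ) :
    vf x ≤ 2 * vf (fun i => α (x i)) ∧ vf (fun i => α (x i)) ≤ 2 * vf x := by
  constructor
  · have h' := Stmt13Aux.vf_le_two_mul (Function.invFun α) (Stmt13Aux.invFun_hpa α hα) n
      (fun i => α (x i))
    have he : (fun i => Function.invFun α ((fun i => α (x i)) i)) = x :=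
      funext fun i => Function.leftInverse_invFun hα.1.injective (x i)
    rwa [he] at h'
  · exact Stmt13Aux.vf_le_two_mul α hα n x
end
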